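/- With R = ℂ[[x,y]]/(xy) ⊆ S = ℂ[[u,v]]/(uv) (x = u², y = v²) and τ(u) = −u, τ(v) = −v, let X ⊆ Frac-type module ℂ[[u]]·(1/u) ⊕ ℂ[[v]]·(1/v) be the S-submodule X = { aα + g₁ + g₂ : g₁ ∈ ℂ[[u]], g₂ ∈ ℂ[[v]], a ∈ ℂ } where α = 1/u + c/v for a fixed c ∈ ℂ*. Then as an R-module with the induced τ-action, X = X₊ ⊕ X₋ with the invariant part X₊ = ℂ[[x]] ⊕ ℂ[[y]] isomorphic to the normalization R̃ of R, and the anti-invariant part X₋ = ℂ·α ⊕ u·ℂ[[x]] ⊕ v·ℂ[[y]] isomorphic to R as an R-module. -/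

import Mathlib

open PowerSeries

/-- `f` is an even power series (a power series in `z²`). -/
def IsEvenPS (f : PowerSeries ℂ) : Prop := ∀ n : ℕ, Odd n → coeff n f = 0

/-- `f` is an odd power series (`z` times a power series in `z²`). -/
def IsOddPS (f : PowerSeries ℂ) : Prop := ∀ n : ℕ, Even n → coeff n f = 0

/-- The nodal ring `R = ℂ⟦x,y⟧/(xy)`, realized as the subring of pairs
`(F(x), G(y)) ∈ ℂ⟦x⟧ × ℂ⟦y⟧` with `F(0) = G(0)`. -/
noncomputable def NodalRing : Subring (PowerSeries ℂ × PowerSeries ℂ) where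
  carrier := {p | constantCoeff p.1 = constantCoeff p.2}
  mul_mem' := by
    intro a b ha hb
    simp only [Set.mem_setOf_eq, Prod.fst_mul, Prod.snd_mul, map_mul] at *
    rw [ha, hb]
  one_mem' := by simp [Set.mem_setOf_eq]
  add_mem' := by
    intro a b ha hb
    simp only [Set.mem_setOf_eq, Prod.fst_add, Prod.snd_add, map_add] at *
    rw [ha, hb]
  zero_mem' := by simp [Set.mem_setOf_eq]
  neg_mem' := by
    intro a ha
    simp only [Set.mem_setOf_eq, Prod.fst_neg, Prod.snd_neg, map_neg] at *
    rw [ha]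

/-- Substitution `X ↦ X²`: the image of `F(x) ∈ ℂ⟦x⟧` under `x = u²`. -/
noncomputable def sqSubst (f : PowerSeries ℂ) : PowerSeries ℂ :=
  PowerSeries.mk fun n => if n % 2 = 0 then coeff (n / 2) f else 0

/-- `(f − f(0))/X`. -/
noncomputable def shiftDown (f : PowerSeries ℂ) : PowerSeries ℂ :=
  PowerSeries.mk fun n => coeff (n + 1) f

/-- The module `X`: `(a, g₁, g₂)` represents `a·α + g₁(u) + g₂(v)` with
`α = 1/u + c/v`, inside `ℂ⟦u⟧·(1/u) ⊕ ℂ⟦v⟧·(1/v)`. The involution `τ` (`u ↦ −u`,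
`v ↦ −v`) acts by `α ↦ −α` and by `rescale (−1)` on `g₁, g₂`. -/
noncomputable def tauX (x : ℂ × PowerSeries ℂ × PowerSeries ℂ) :
    ℂ × PowerSeries ℂ × PowerSeries ℂ :=
  (-x.1, rescale (-1 : ℂ) x.2.1, rescale (-1 : ℂ) x.2.2)

/-- The `R = NodalRing`-module structure on `X`: `(F,G) • (a·α + g₁ + g₂)` is computed
from `F(u²)·(a/u + g₁(u))` on the `u`-branch and `G(v²)·(ca/v + g₂(v))` on the
`v`-branch, using `F(u²)/u = F(0)/u + u·((F(u²) − F(0))/u²)`. -/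
noncomputable def smulX (c : ℂ) (r : NodalRing) (x : ℂ × PowerSeries ℂ × PowerSeries ℂ) :
    ℂ × PowerSeries ℂ × PowerSeries ℂ :=
  (constantCoeff (r : PowerSeries ℂ × PowerSeries ℂ).1 * x.1,
   sqSubst (r : PowerSeries ℂ × PowerSeries ℂ).1 * x.2.1 +
     x.1 • shiftDown (sqSubst (r : PowerSeries ℂ × PowerSeries ℂ).1),
   sqSubst (r : PowerSeries ℂ × PowerSeries ℂ).2 * x.2.2 +
     (c * x.1) • shiftDown (sqSubst (r : PowerSeries ℂ × PowerSeries ℂ).2))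

lemma coeff_sqSubst (f : PowerSeries ℂ) (n : ℕ) :
    coeff n (sqSubst f) = if n % 2 = 0 then coeff (n / 2) f else 0 :=
  coeff_mk n _

lemma coeff_sqSubst_double (f : PowerSeries ℂ) (m : ℕ) :
    coeff (2 * m) (sqSubst f) = coeff m f := by
  rw [coeff_sqSubst]; simp [Nat.mul_div_cancel_left, Nat.mul_mod_right]

lemma coeff_shiftDown (f : PowerSeries ℂ) (n : ℕ) :
    coeff n (shiftDown f) = coeff (n + 1) f := coeff_mk n _

lemma sqSubst_add (f g : PowerSeries ℂ) : sqSubst (f + g) = sqSubst f + sqSubst g := by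
  ext n; simp only [coeff_sqSubst, map_add]; split <;> simp

lemma shiftDown_add (f g : PowerSeries ℂ) : shiftDown (f + g) = shiftDown f + shiftDown g := by
  ext n; simp [coeff_shiftDown]

lemma shiftDown_smul (a : ℂ) (f : PowerSeries ℂ) : shiftDown (a • f) = a • shiftDown f := by
  ext n; simp [coeff_shiftDown, PowerSeries.coeff_smul]

lemma sqSubst_mul (f g : PowerSeries ℂ) : sqSubst (f * g) = sqSubst f * sqSubst g := by
  ext n
  rw [PowerSeries.coeff_mul, coeff_sqSubst]
  by_cases h : n % 2 = 0
  · obtain ⟨m, rfl⟩ : ∃ m, n = 2 * m := ⟨n / 2, by omega⟩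
    simp only [h, if_true]
    have himg : (Finset.HasAntidiagonal.antidiagonal m).image (fun p : ℕ × ℕ => (2 * p.1, 2 * p.2)) ⊆
        Finset.HasAntidiagonal.antidiagonal (2 * m) := by
      intro p hp
      simp only [Finset.mem_image, Finset.HasAntidiagonal.mem_antidiagonal] at *
      obtain ⟨q, hq, rfl⟩ := hp
      dsimp; omega
    rw [show coeff (2 * m / 2) (f * g) = coeff m (f * g) by rw [Nat.mul_div_cancel_left _ two_pos],
      PowerSeries.coeff_mul,
      ← Finset.sum_subset himg (by
        intro p hp hnp
        rw [Finset.HasAntidiagonal.mem_antidiagonal] at hp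
        by_cases h1 : p.1 % 2 = 0
        · exfalso
          apply hnp
          simp only [Finset.mem_image, Finset.HasAntidiagonal.mem_antidiagonal]
          exact ⟨(p.1 / 2, p.2 / 2), by omega, by simp only [Prod.ext_iff]; constructor <;> (try dsimp only) <;> omega⟩
        · rw [coeff_sqSubst, if_neg h1, zero_mul]),
      Finset.sum_image (by intro a _ b _ hab; simp only [Prod.ext_iff] at *; omega)]
    apply Finset.sum_congr rfl
    intro p _
    rw [coeff_sqSubst_double, coeff_sqSubst_double]
  · simp only [h, if_false]
    symm
    apply Finset.sum_eq_zero
    intro p hp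
    rw [Finset.HasAntidiagonal.mem_antidiagonal] at hp
    by_cases h1 : p.1 % 2 = 0
    · have h2 : ¬ p.2 % 2 = 0 := by omega
      rw [coeff_sqSubst g, if_neg h2, mul_zero]
    · rw [coeff_sqSubst, if_neg h1, zero_mul]

lemma shiftDown_mul (A B : PowerSeries ℂ) :
    shiftDown (A * B) = A * shiftDown B + constantCoeff B • shiftDown A := by
  ext n
  rw [map_add, coeff_shiftDown, PowerSeries.coeff_mul, Finset.Nat.sum_antidiagonal_succ',
    PowerSeries.coeff_smul, coeff_shiftDown, PowerSeries.coeff_mul]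
  rw [add_comm]
  congr 1
  · apply Finset.sum_congr rfl; intro p _; rw [coeff_shiftDown]
  · rw [smul_eq_mul, mul_comm]; congr 1
    exact coeff_zero_eq_constantCoeff_apply B

lemma rescale_neg_one_eq_self_iff (f : PowerSeries ℂ) :
    rescale (-1 : ℂ) f = f ↔ IsEvenPS f := by
  constructor
  · intro h n hn
    have h2 := congrArg (coeff n) h
    rw [coeff_rescale, Odd.neg_one_pow hn, neg_one_mul] at h2
    linear_combination (-1/2 : ℂ) * h2
  · intro h
    ext n
    rw [coeff_rescale]
    rcases Nat.even_or_odd n with he | ho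
    · rw [Even.neg_one_pow he, one_mul]
    · rw [h n ho, mul_zero]

lemma rescale_neg_one_eq_neg_iff (f : PowerSeries ℂ) :
    rescale (-1 : ℂ) f = -f ↔ IsOddPS f := by
  constructor
  · intro h n hn
    have h2 := congrArg (coeff n) h
    rw [coeff_rescale, Even.neg_one_pow hn, one_mul, map_neg] at h2
    linear_combination (1/2 : ℂ) * h2
  · intro h
    ext n
    rw [coeff_rescale, map_neg]
    rcases Nat.even_or_odd n with he | ho
    · rw [h n he, mul_zero, neg_zero]
    · rw [Odd.neg_one_pow ho, neg_one_mul]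

lemma tau_fixed_iffP (x : ℂ × PowerSeries ℂ × PowerSeries ℂ) :
    tauX x = x ↔ (x.1 = 0 ∧ IsEvenPS x.2.1 ∧ IsEvenPS x.2.2) := by
  obtain ⟨a, g1, g2⟩ := x
  simp only [tauX, Prod.mk.injEq]
  rw [rescale_neg_one_eq_self_iff, rescale_neg_one_eq_self_iff]
  constructor
  · rintro ⟨h1, h2, h3⟩
    exact ⟨by linear_combination (-1/2 : ℂ) * h1, h2, h3⟩
  · rintro ⟨h1, h2, h3⟩
    exact ⟨by rw [h1, neg_zero], h2, h3⟩

lemma tau_anti_iffP (x : ℂ × PowerSeries ℂ × PowerSeries ℂ) :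
    tauX x = -x ↔ (IsOddPS x.2.1 ∧ IsOddPS x.2.2) := by
  obtain ⟨a, g1, g2⟩ := x
  simp only [tauX, Prod.neg_mk, Prod.mk.injEq, true_and]
  rw [rescale_neg_one_eq_neg_iff, rescale_neg_one_eq_neg_iff]

noncomputable def evenPart (f : PowerSeries ℂ) : PowerSeries ℂ :=
  PowerSeries.mk fun n => if n % 2 = 0 then coeff n f else 0
noncomputable def oddPart (f : PowerSeries ℂ) : PowerSeries ℂ :=
  PowerSeries.mk fun n => if n % 2 = 0 then 0 else coeff n f

lemma evenPart_isEven (f : PowerSeries ℂ) : IsEvenPS (evenPart f) := by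
  intro n hn
  rw [evenPart, coeff_mk, if_neg (by rw [Nat.odd_iff] at hn; omega)]

lemma oddPart_isOdd (f : PowerSeries ℂ) : IsOddPS (oddPart f) := by
  intro n hn
  rw [oddPart, coeff_mk, if_pos (by rw [Nat.even_iff] at hn; omega)]

lemma evenPart_add_oddPart (f : PowerSeries ℂ) : evenPart f + oddPart f = f := by
  ext n
  rw [map_add, evenPart, oddPart, coeff_mk, coeff_mk]
  split <;> ring

lemma constantCoeff_sqSubst (f : PowerSeries ℂ) :
    constantCoeff (sqSubst f) = constantCoeff f := by
  rw [← coeff_zero_eq_constantCoeff_apply, ← coeff_zero_eq_constantCoeff_apply, coeff_sqSubst]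
  norm_num

lemma sqSubst_isEven (f : PowerSeries ℂ) : IsEvenPS (sqSubst f) := by
  intro n hn
  rw [coeff_sqSubst, if_neg (by rw [Nat.odd_iff] at hn; omega)]

lemma shiftDown_sqSubst_isOdd (f : PowerSeries ℂ) : IsOddPS (shiftDown (sqSubst f)) := by
  intro n hn
  rw [coeff_shiftDown, coeff_sqSubst, if_neg (by rw [Nat.even_iff] at hn; omega)]

lemma sqSubst_injective : Function.Injective sqSubst := by
  intro f g h
  ext m
  have := congrArg (coeff (2 * m)) h
  rwa [coeff_sqSubst_double, coeff_sqSubst_double] at this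

lemma coeff_shiftDown_sqSubst_odd (f : PowerSeries ℂ) (k : ℕ) :
    coeff (2 * k + 1) (shiftDown (sqSubst f)) = coeff (k + 1) f := by
  rw [coeff_shiftDown, show 2 * k + 1 + 1 = 2 * (k + 1) by ring, coeff_sqSubst_double]

lemma const_shiftDown_sqSubst_inj (F G : PowerSeries ℂ)
    (h0 : constantCoeff F = constantCoeff G)
    (hs : shiftDown (sqSubst F) = shiftDown (sqSubst G)) : F = G := by
  ext m
  cases m with
  | zero => rw [coeff_zero_eq_constantCoeff_apply, coeff_zero_eq_constantCoeff_apply, h0]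
  | succ k =>
    have := congrArg (coeff (2 * k + 1)) hs
    rwa [coeff_shiftDown_sqSubst_odd, coeff_shiftDown_sqSubst_odd] at this

/-
STATEMENT 15. With `R = ℂ⟦x,y⟧/(xy) ⊆ S = ℂ⟦u,v⟧/(uv)` (`x = u²`, `y = v²`),
`τ(u) = −u`, `τ(v) = −v`, and `c ∈ ℂ*`, let `X` be the `S`-module (here considered as an
`R`-module via `smulX c`) of elements `a·α + g₁ + g₂`, `α = 1/u + c/v`,
`g₁ ∈ ℂ⟦u⟧`, `g₂ ∈ ℂ⟦v⟧`.
Claims, as `R`-modules with the induced `τ`-action `tauX`: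
(i) `X` decomposes uniquely as `X = X₊ ⊕ X₋` into `τ`-eigenspaces;
(ii) `X₊ = {(0, g₁, g₂) : g₁, g₂ even}` (`= ℂ⟦x⟧ ⊕ ℂ⟦y⟧`);
(iii) `X₋ = {(a, g₁, g₂) : g₁, g₂ odd}` (`= ℂ·α ⊕ u·ℂ⟦x⟧ ⊕ v·ℂ⟦y⟧`);
(iv) `X₊` is isomorphic as an `R`-module to the normalization `R̃ = ℂ⟦x⟧ × ℂ⟦y⟧`;
(v) `X₋` is isomorphic as an `R`-module to `R` (free of rank one, generated by `α`).
-/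
theorem nodal_OpPlusQ_local_decomposition (c : ℂ) (hc : c ≠ 0) :
    -- (i) unique eigenspace decomposition
    (∀ x : ℂ × PowerSeries ℂ × PowerSeries ℂ,
      ∃! q : (ℂ × PowerSeries ℂ × PowerSeries ℂ) × (ℂ × PowerSeries ℂ × PowerSeries ℂ),
        x = q.1 + q.2 ∧ tauX q.1 = q.1 ∧ tauX q.2 = -q.2) ∧
    -- (ii) the invariant part
    (∀ x : ℂ × PowerSeries ℂ × PowerSeries ℂ,
      tauX x = x ↔ (x.1 = 0 ∧ IsEvenPS x.2.1 ∧ IsEvenPS x.2.2)) ∧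
    -- (iii) the anti-invariant part
    (∀ x : ℂ × PowerSeries ℂ × PowerSeries ℂ,
      tauX x = -x ↔ (IsOddPS x.2.1 ∧ IsOddPS x.2.2)) ∧
    -- (iv) `X₊ ≅ R̃ = ℂ⟦x⟧ × ℂ⟦y⟧` as `R`-modules
    (∃ Ψ : PowerSeries ℂ × PowerSeries ℂ → ℂ × PowerSeries ℂ × PowerSeries ℂ,
      (∀ p q, Ψ (p + q) = Ψ p + Ψ q) ∧
      (∀ (r : NodalRing) (p : PowerSeries ℂ × PowerSeries ℂ),
        Ψ ((r : PowerSeries ℂ × PowerSeries ℂ) * p) = smulX c r (Ψ p)) ∧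
      (∀ p, tauX (Ψ p) = Ψ p) ∧
      Function.Injective Ψ ∧
      (∀ x, tauX x = x → ∃ p, Ψ p = x)) ∧
    -- (v) `X₋ ≅ R` as `R`-modules
    (∃ Φ : NodalRing → ℂ × PowerSeries ℂ × PowerSeries ℂ,
      (∀ r s : NodalRing, Φ (r + s) = Φ r + Φ s) ∧
      (∀ r s : NodalRing, Φ (r * s) = smulX c r (Φ s)) ∧
      (∀ r : NodalRing, tauX (Φ r) = -(Φ r)) ∧
      Function.Injective Φ ∧
      (∀ x, tauX x = -x → ∃ r, Φ r = x)) := by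
  refine ⟨?_, tau_fixed_iffP, tau_anti_iffP, ?_, ?_⟩
  · -- (i)
    intro x
    obtain ⟨a, g1, g2⟩ := x
    refine ⟨((0, evenPart g1, evenPart g2), (a, oddPart g1, oddPart g2)), ⟨?_, ?_, ?_⟩, ?_⟩
    · simp only [Prod.ext_iff, Prod.fst_add, Prod.snd_add]
      exact ⟨(zero_add a).symm, (evenPart_add_oddPart g1).symm, (evenPart_add_oddPart g2).symm⟩
    · exact (tau_fixed_iffP _).2 ⟨rfl, evenPart_isEven g1, evenPart_isEven g2⟩
    · exact (tau_anti_iffP _).2 ⟨oddPart_isOdd g1, oddPart_isOdd g2⟩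
    · rintro ⟨p1, p2⟩ ⟨hsum, hfix, hanti⟩
      obtain ⟨hp0, he1, he2⟩ := (tau_fixed_iffP p1).1 hfix
      obtain ⟨ho1, ho2⟩ := (tau_anti_iffP p2).1 hanti
      have key : ∀ (g q1 q2 : PowerSeries ℂ), g = q1 + q2 → IsEvenPS q1 → IsOddPS q2 →
          q1 = evenPart g := by
        intro g q1 q2 hg h1 h2
        ext n
        rw [evenPart, coeff_mk]
        rcases Nat.even_or_odd n with he | ho
        · rw [if_pos (Nat.even_iff.1 he), hg, map_add, h2 n he, add_zero]
        · rw [if_neg (by rw [Nat.odd_iff] at ho; omega), h1 n ho]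
      have hg1 : p1.2.1 = evenPart g1 := by
        refine key g1 p1.2.1 p2.2.1 ?_ he1 ho1
        have hx := congrArg (fun z => z.2.1) hsum
        simpa using hx
      have hg2 : p1.2.2 = evenPart g2 := by
        refine key g2 p1.2.2 p2.2.2 ?_ he2 ho2
        have hx := congrArg (fun z => z.2.2) hsum
        simpa using hx
      have hp1 : p1 = (0, evenPart g1, evenPart g2) := by
        rw [Prod.ext_iff, Prod.ext_iff]
        exact ⟨hp0, hg1, hg2⟩
      have hp2 : p2 = (a, oddPart g1, oddPart g2) := by
        have h := eq_sub_of_add_eq' hsum.symm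
        dsimp only at h
        rw [h, hp1]
        rw [Prod.ext_iff, Prod.ext_iff]
        refine ⟨by simp, ?_, ?_⟩ <;>
        · simp only [Prod.snd_sub, Prod.fst_sub]
          ext n
          rw [map_sub, evenPart, oddPart, coeff_mk, coeff_mk]
          split <;> ring
      simp only [Prod.mk.injEq]
      exact ⟨hp1, hp2⟩
  · -- (iv)
    refine ⟨fun p => (0, sqSubst p.1, sqSubst p.2), ?_, ?_, ?_, ?_, ?_⟩
    · intro p q
      simp [Prod.ext_iff, sqSubst_add]
    · intro r p
      simp [smulX, Prod.ext_iff, sqSubst_mul]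
    · intro p
      exact (tau_fixed_iffP _).2 ⟨rfl, sqSubst_isEven _, sqSubst_isEven _⟩
    · intro p q h
      simp only [Prod.mk.injEq, true_and] at h
      exact Prod.ext_iff.2 ⟨sqSubst_injective h.1, sqSubst_injective h.2⟩
    · intro x hx
      obtain ⟨h0, he1, he2⟩ := (tau_fixed_iffP x).1 hx
      have key : ∀ g : PowerSeries ℂ, IsEvenPS g →
          sqSubst (PowerSeries.mk fun m => coeff (2 * m) g) = g := by
        intro g hg
        ext n
        rw [coeff_sqSubst]
        by_cases h : n % 2 = 0
        · rw [if_pos h, coeff_mk, show 2 * (n / 2) = n from by omega]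
        · rw [if_neg h]
          exact (hg n (Nat.odd_iff.2 (by omega))).symm
      refine ⟨(PowerSeries.mk fun m => coeff (2 * m) x.2.1,
        PowerSeries.mk fun m => coeff (2 * m) x.2.2), ?_⟩
      rw [Prod.ext_iff, Prod.ext_iff]
      exact ⟨h0.symm, key _ he1, key _ he2⟩
  · -- (v)
    refine ⟨fun r => (constantCoeff (r : PowerSeries ℂ × PowerSeries ℂ).1,
      shiftDown (sqSubst (r : PowerSeries ℂ × PowerSeries ℂ).1),
      c • shiftDown (sqSubst (r : PowerSeries ℂ × PowerSeries ℂ).2)), ?_, ?_, ?_, ?_, ?_⟩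
    · intro r s
      simp [Prod.ext_iff, sqSubst_add, shiftDown_add, smul_add]
    · intro r s
      have hs : constantCoeff (s : PowerSeries ℂ × PowerSeries ℂ).1 =
          constantCoeff (s : PowerSeries ℂ × PowerSeries ℂ).2 := s.2
      simp only [smulX, Subring.coe_mul, Prod.fst_mul, Prod.snd_mul, map_mul, sqSubst_mul,
        shiftDown_mul, constantCoeff_sqSubst, Prod.mk.injEq]
      refine ⟨trivial, trivial, ?_⟩
      rw [smul_add, smul_smul, ← hs, mul_smul_comm]
    · intro r
      refine (tau_anti_iffP _).2 ⟨shiftDown_sqSubst_isOdd _, ?_⟩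
      intro n hn
      rw [PowerSeries.coeff_smul, shiftDown_sqSubst_isOdd _ n hn, smul_zero]
    · intro r s h
      simp only [Prod.mk.injEq] at h
      obtain ⟨h1, h2, h3⟩ := h
      have hr2 : shiftDown (sqSubst (r : PowerSeries ℂ × PowerSeries ℂ).2) =
          shiftDown (sqSubst (s : PowerSeries ℂ × PowerSeries ℂ).2) := by
        ext n
        have hx := congrArg (coeff n) h3
        rw [PowerSeries.coeff_smul, PowerSeries.coeff_smul, smul_eq_mul, smul_eq_mul] at hx
        exact mul_left_cancel₀ hc hx
      have hr : constantCoeff (r : PowerSeries ℂ × PowerSeries ℂ).1 =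
          constantCoeff (r : PowerSeries ℂ × PowerSeries ℂ).2 := r.2
      have hs : constantCoeff (s : PowerSeries ℂ × PowerSeries ℂ).1 =
          constantCoeff (s : PowerSeries ℂ × PowerSeries ℂ).2 := s.2
      exact Subtype.ext (Prod.ext_iff.2 ⟨const_shiftDown_sqSubst_inj _ _ h1 h2,
        const_shiftDown_sqSubst_inj _ _ (hr.symm.trans (h1.trans hs)) hr2⟩)
    · intro x hx
      obtain ⟨ho1, ho2⟩ := (tau_anti_iffP x).1 hx
      set F := PowerSeries.mk fun m => if m = 0 then x.1 else coeff (2 * m - 1) x.2.1 with hF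
      set G := PowerSeries.mk fun m =>
        if m = 0 then x.1 else c⁻¹ * coeff (2 * m - 1) x.2.2 with hG
      have hmem : (F, G) ∈ NodalRing := by
        show constantCoeff F = constantCoeff G
        rw [← coeff_zero_eq_constantCoeff_apply, ← coeff_zero_eq_constantCoeff_apply,
          hF, hG, coeff_mk, coeff_mk]
        simp
      refine ⟨⟨(F, G), hmem⟩, ?_⟩
      rw [Prod.ext_iff, Prod.ext_iff]
      refine ⟨?_, ?_, ?_⟩
      · show constantCoeff F = x.1
        rw [← coeff_zero_eq_constantCoeff_apply, hF, coeff_mk]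
        simp
      · show shiftDown (sqSubst F) = x.2.1
        ext n
        rw [coeff_shiftDown, coeff_sqSubst]
        rcases Nat.even_or_odd n with he | ho
        · rw [if_neg (by rw [Nat.even_iff] at he; omega)]
          exact (ho1 n he).symm
        · obtain ⟨k, rfl⟩ := ho
          rw [if_pos (by omega), show (2 * k + 1 + 1) / 2 = k + 1 from by omega, hF, coeff_mk,
            if_neg (Nat.succ_ne_zero k), show 2 * (k + 1) - 1 = 2 * k + 1 from by omega]
      · show c • shiftDown (sqSubst G) = x.2.2
        ext n
        rw [PowerSeries.coeff_smul, smul_eq_mul, coeff_shiftDown, coeff_sqSubst]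
        rcases Nat.even_or_odd n with he | ho
        · rw [if_neg (by rw [Nat.even_iff] at he; omega), mul_zero]
          exact (ho2 n he).symm
        · obtain ⟨k, rfl⟩ := ho
          rw [if_pos (by omega), show (2 * k + 1 + 1) / 2 = k + 1 from by omega, hG, coeff_mk,
            if_neg (Nat.succ_ne_zero k), show 2 * (k + 1) - 1 = 2 * k + 1 from by omega,
            mul_inv_cancel_left₀ hc]
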